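/- Suppose 0 < ε < 1/4. For any E ∈ 𝓛 of arity n and any ε-excellent A_0, …, A_{n−1} ∈ M̂∖M, the value Ê^m̄_ε(A_0, …, A_{n−1}) is an element of {⊤,⊥} and is the same for every enumeration m̄ of {0,…,n−1} (this common value is denoted Ê_ε(A_0,…,A_{n−1})). -/

import Mathlib

open scoped Classical

noncomputable section

/-- Truth values: true, false, and indeterminate. -/
inductive TV where
  | top : TV
  | bot : TV
  | up  : TV
deriving DecidableEq

/-- A finite relational language. -/
structure RelLanguage where
  Symb : Type
  [fintypeSymb : Fintype Symb]
  arity : Symb → ℕ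

attribute [instance] RelLanguage.fintypeSymb

/-- `q_𝓛`, the maximal arity of a relation symbol. -/
def RelLanguage.q (L : RelLanguage) : ℕ := Finset.univ.sup L.arity

/-- `n_𝓛 = |𝓛| ⬝ q_𝓛`. -/
def RelLanguage.nL (L : RelLanguage) : ℕ := Fintype.card L.Symb * L.q

/-- A structure for a finite relational language, on underlying set `M`. -/
structure RelStructure (L : RelLanguage) (M : Type*) where
  rel : ∀ E : L.Symb, (Fin (L.arity E) → M) → Bool

/-- `M̂ = M ∪ 𝒫(M)`: an argument is either an element of `M` or a subset of `M`. -/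
abbrev Arg (M : Type*) := M ⊕ Finset M

/-- Membership of an element in an argument: equality for elements, membership for sets. -/
def Arg.mem {M : Type*} (a : M) : Arg M → Prop
  | Sum.inl b => a = b
  | Sum.inr s => a ∈ s

/-- The size of an argument: `1` for an element, the cardinality for a set. -/
def Arg.size {M : Type*} : Arg M → ℕ
  | Sum.inl _ => 1
  | Sum.inr s => s.card

variable {M : Type*} [Fintype M] [DecidableEq M]

/-- The ε-partial relation `Ê^m̄_ε`, where the list of indices is given in
*polling order*: the head of the list is the index polled first (outermost),
i.e. the list is the *reverse* of the tuple `m̄` of the paper. -/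
def pollAux (ε : ℝ) {n : ℕ} (R : (Fin n → M) → Bool) :
    List (Fin n) → (Fin n → Arg M) → TV
  | [], A =>
      if h : ∃ f : Fin n → M, ∀ i, A i = Sum.inl (f i) then
        (if R (Classical.choose h) then TV.top else TV.bot)
      else TV.up
  | j :: rest, A =>
      match A j with
      | Sum.inl _ => TV.up
      | Sum.inr Aj =>
          if (((Aj.filter fun a =>
                pollAux ε R rest (Function.update A j (Sum.inl a)) = TV.top).card : ℝ)
              > (1 - ε) * (Aj.card : ℝ)) then TV.top
          else if (((Aj.filter fun a =>
                pollAux ε R rest (Function.update A j (Sum.inl a)) = TV.bot).card : ℝ)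
              > (1 - ε) * (Aj.card : ℝ)) then TV.bot
          else TV.up

/-- The ε-partial relation `Ê^m̄_ε`, with `m̄` given in the paper's order
(the *last* entry of `m̄` is the index polled first). -/
def partialRel (ε : ℝ) {n : ℕ} (R : (Fin n → M) → Bool)
    (mbar : List (Fin n)) (A : Fin n → Arg M) : TV :=
  pollAux ε R mbar.reverse A

/-- The value `Ê^{⟨σ⁻¹(l-1),…,σ⁻¹(1),σ⁻¹(0)⟩}_ε (A_{σ(0)}, …, A_{σ(n-1)})`. -/
def pollValue (ε : ℝ) {n : ℕ} (R : (Fin n → M) → Bool) (l : ℕ)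
    (σ : Equiv.Perm (Fin n)) (A : Fin n → Arg M) : TV :=
  pollAux ε R (((List.finRange n).take l).map σ.symm) fun i => A (σ i)

/-- `(ε, ℓ, E)`-goodness of an argument, for the relation `R` interpreting `E`. -/
def IsGood (ε : ℝ) {n : ℕ} (R : (Fin n → M) → Bool) : ℕ → Arg M → Prop
  | 0, A₀ => A₀.isLeft = true
  | (m+1), A₀ =>
      (∀ k, 1 ≤ k → k < m + 1 → IsGood ε R k A₀) ∧
      (∀ (A : Fin n → Arg M) (σ : Equiv.Perm (Fin n)),
        (∀ i : Fin n, (i : ℕ) = 0 → A i = A₀) →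
        (∀ i : Fin n, 1 ≤ (i : ℕ) → (i : ℕ) < m + 1 →
            (A i).isRight = true ∧ IsGood ε R (m + 1 - (i : ℕ)) (A i)) →
        (∀ i : Fin n, m + 1 ≤ (i : ℕ) → (A i).isLeft = true) →
        pollValue ε R (m + 1) σ A ≠ TV.up)
  termination_by l _ => l
  decreasing_by all_goals omega

/-- `A` is ε-excellent: `(ε, arity(E), E)`-good for every relation symbol `E`. -/
def IsExcellent (ε : ℝ) {L : RelLanguage} (𝓜 : RelStructure L M) (A : Arg M) : Prop :=
  ∀ E : L.Symb, IsGood ε (𝓜.rel E) (L.arity E) A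

/-- `P` is a partition of the finite set `S`. -/
def IsPartition {V : Type*} [DecidableEq V] (P : Finset (Finset V)) (S : Finset V) : Prop :=
  (∀ p ∈ P, p.Nonempty) ∧
  (∀ p ∈ P, ∀ q ∈ P, p ≠ q → Disjoint p q) ∧
  (∀ x, x ∈ S ↔ ∃ p ∈ P, x ∈ p)

/-- A partition is equitable when any two parts differ in size by at most 1. -/
def IsEquitable {V : Type*} (P : Finset (Finset V)) : Prop :=
  ∀ p ∈ P, ∀ q ∈ P, p.card ≤ q.card + 1

/-- Indivisibility of a partition with respect to a single relation. -/
def IndivisibleRel {n : ℕ} (P : Finset (Finset M)) (R : (Fin n → M) → Bool) : Prop :=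
  ∀ p : Fin n → Finset M, (∀ i, p i ∈ P) →
    ∀ a b : Fin n → M, (∀ i, a i ∈ p i) → (∀ i, b i ∈ p i) → R a = R b

/-- Indivisibility of a partition with respect to a structure. -/
def Indivisible {L : RelLanguage} (P : Finset (Finset M)) (𝓝 : RelStructure L M) : Prop :=
  ∀ E : L.Symb, IndivisibleRel P (𝓝.rel E)

/-- The τ-branching property for an `n`-ary relation `R` with the variable partition
`(x_ℓ; the remaining variables)`. -/
def RelBranching {n : ℕ} (R : (Fin n → M) → Bool) (ℓ : Fin n) (τ : ℕ) : Prop :=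
  ∃ (a : List Bool → M) (b : List Bool → (Fin n → M)),
    ∀ i : List Bool, i.length = τ →
      ∀ j : List Bool, j.length < τ → ∀ h : Bool,
        (j ++ [h]) <+: i → (R (Function.update (b j) ℓ (a i)) = h)

/-- `𝓜` does not have the τ-branching property (for any relation symbol and
any singleton variable partition). -/
def NonBranching {L : RelLanguage} (𝓜 : RelStructure L M) (τ : ℕ) : Prop :=
  ∀ (E : L.Symb) (j : Fin (L.arity E)), ¬ RelBranching (𝓜.rel E) j τ

/-- `g = ⌈5 ⬝ n_𝓛 ⬝ τ̂ ⬝ log₂ τ̂⌉`. -/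
def gBound (L : RelLanguage) (τ : ℕ) : ℕ :=
  ⌈5 * (L.nL : ℝ) * (τ : ℝ) * Real.logb 2 (τ : ℝ)⌉₊

/-- A staircase `⟨m_j⟩_{j ≤ k}`. -/
def Staircase (ε : ℝ) (ms : ℕ → ℕ) (k : ℕ) : Prop :=
  (∀ j ≤ k, 0 < ms j) ∧ ∀ j < k, (ms (j + 1) : ℝ) ≤ ε * (ms j : ℝ)

end
section Aux

variable {M : Type*} [Fintype M] [DecidableEq M] {n : ℕ}

/-- A configuration is valid for a polling list `l` if the arguments at indices in `l`
are `(ε,n)`-good sets and all other arguments are elements. -/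
def ValidCfg (ε : ℝ) (R : (Fin n → M) → Bool) (l : List (Fin n)) (C : Fin n → Arg M) : Prop :=
  (∀ i ∈ l, ∃ S : Finset M, C i = Sum.inr S ∧ IsGood ε R n (Sum.inr S)) ∧
  (∀ i, i ∉ l → (C i).isLeft = true)

variable {ε : ℝ} {R : (Fin n → M) → Bool}

lemma isGood_le {X : Arg M} (h : IsGood ε R n X) {k : ℕ} (h1 : 1 ≤ k) (h2 : k ≤ n) :
    IsGood ε R k X := by
  rcases eq_or_lt_of_le h2 with rfl | hlt
  · exact h
  · obtain ⟨m, rfl⟩ : ∃ m, n = m + 1 := ⟨n - 1, by omega⟩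
    rw [IsGood] at h
    exact h.1 k h1 hlt

lemma pollAux_cons {x : Fin n} {u : List (Fin n)} {D : Fin n → Arg M} {S : Finset M}
    (hD : D x = Sum.inr S) :
    pollAux ε R (x::u) D =
      if (((S.filter fun a => pollAux ε R u (Function.update D x (Sum.inl a)) = TV.top).card : ℝ)
            > (1 - ε) * (S.card : ℝ)) then TV.top
      else if (((S.filter fun a => pollAux ε R u (Function.update D x (Sum.inl a)) = TV.bot).card : ℝ)
            > (1 - ε) * (S.card : ℝ)) then TV.bot
      else TV.up := by
  rw [pollAux, hD]

lemma validCfg_cons_update {x : Fin n} {l : List (Fin n)} {C : Fin n → Arg M} {a : M}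
    (hx : x ∉ l) (hv : ValidCfg ε R (x::l) C) :
    ValidCfg ε R l (Function.update C x (Sum.inl a)) := by
  constructor
  · intro i hi
    have hix : i ≠ x := fun h => hx (h ▸ hi)
    rw [Function.update_of_ne hix]
    exact hv.1 i (by simp [hi])
  · intro i hi
    by_cases hix : i = x
    · subst hix; simp
    · rw [Function.update_of_ne hix]
      exact hv.2 i (by simp [hi, hix])

lemma pollAux_ne_up {l : List (Fin n)} {C : Fin n → Arg M}
    (hnd : l.Nodup) (hv : ValidCfg ε R l C) :
    pollAux ε R l C ≠ TV.up := by
  cases l with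
  | nil =>
    have hall : ∀ i, ∃ a, C i = Sum.inl a := fun i => Sum.isLeft_iff.mp (hv.2 i (by simp))
    choose f hf using hall
    rw [pollAux, dif_pos ⟨f, hf⟩]
    split <;> simp
  | cons x rest =>
    obtain ⟨S₀, hS₀, hgood₀⟩ := hv.1 x (by simp)
    set l : List (Fin n) := x :: rest with hl
    set t : List (Fin n) := (List.finRange n).filter (fun i => i ∉ l) with ht
    set l' : List (Fin n) := l ++ t with hl'
    have hnd' : l'.Nodup := by
      refine List.Nodup.append hnd (List.Nodup.filter _ (List.nodup_finRange n)) ?_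
      intro a ha hat
      have := (List.mem_filter.mp hat).2
      simp only [decide_eq_true_eq] at this
      exact this ha
    have hmem' : ∀ a, a ∈ l' := by
      intro a
      by_cases h : a ∈ l
      · exact List.mem_append.mpr (Or.inl h)
      · exact List.mem_append.mpr (Or.inr (List.mem_filter.mpr
          ⟨List.mem_finRange a, by simpa using h⟩))
    have hlen : l'.length = n := by
      have h1 : l'.toFinset = Finset.univ := by ext a; simp [hmem' a]
      have h2 := List.toFinset_card_of_nodup hnd'
      rw [h1] at h2
      simpa using h2.symm
    have hlln : l.length ≤ n := by
      have : l.length ≤ l'.length := by simp [hl']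
      omega
    set e := List.Nodup.getEquivOfForallMemList l' hnd' hmem' with he
    set σ : Equiv.Perm (Fin n) := ((finCongr hlen.symm).trans e).symm with hσ
    have hσs : ∀ k : Fin n, σ.symm k = l'.get ⟨(k : ℕ), by rw [hlen]; exact k.isLt⟩ := by
      intro k; rfl
    set B : Fin n → Arg M := fun i => C (σ.symm i) with hB
    obtain ⟨m, hm⟩ : ∃ m, l.length = m + 1 := ⟨rest.length, by simp [hl]⟩
    have hgood : IsGood ε R (m+1) (Sum.inr S₀) := isGood_le hgood₀ (by omega) (by omega)
    rw [IsGood] at hgood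
    have hne := hgood.2 B σ ?_ ?_ ?_
    · have hlist : ((List.finRange n).take (m+1)).map σ.symm = l := by
        apply List.ext_getElem
        · simp; omega
        · intro i h1 h2
          have hi : i < n := by omega
          have h3 : (((List.finRange n).take (m+1)).map σ.symm)[i] = σ.symm ⟨i, hi⟩ := by
            simp [List.getElem_take, List.getElem_finRange]
          have h4 : l'[i]'(by rw [hlen]; omega) = l[i] := List.getElem_append_left h2
          rw [h3, hσs]
          simp only [List.get_eq_getElem]
          exact h4
      have : pollValue ε R (m+1) σ B = pollAux ε R l C := by
        rw [pollValue, hlist]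
        congr 1
        funext i
        simp [hB]
      rw [this] at hne
      exact hne
    · -- index 0
      rintro ⟨iv, hiv⟩ h0
      simp only at h0
      subst h0
      have : σ.symm ⟨0, hiv⟩ = x := by rw [hσs]; rfl
      rw [hB]
      simp only [this, hS₀]
    · -- indices 1..m
      rintro ⟨iv, hiv⟩ hge hlt
      simp only at hge hlt
      have hivl : iv < l.length := by omega
      have hgl : l'.get ⟨iv, by rw [hlen]; exact hiv⟩ = l[iv] := List.getElem_append_left hivl
      have hmem : l[iv] ∈ l := List.getElem_mem _
      obtain ⟨S, hS, hSg⟩ := hv.1 _ hmem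
      have hBi : B ⟨iv, hiv⟩ = Sum.inr S := by
        rw [hB]; simp only [hσs, hgl, hS]
      constructor
      · rw [hBi]; rfl
      · rw [hBi]
        simp only [Fin.val_mk]
        exact isGood_le hSg (by omega) (by omega)
    · -- indices ≥ m+1
      rintro ⟨iv, hiv⟩ hge
      simp only at hge
      have hivl : l.length ≤ iv := by omega
      have hivt : iv - l.length < t.length := by
        have : l'.length = l.length + t.length := by simp [hl']
        omega
      have hgl : l'.get ⟨iv, by rw [hlen]; exact hiv⟩ = t[iv - l.length] := by
        simp only [hl', List.get_eq_getElem]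
        exact List.getElem_append_right hivl
      have hmt : t[iv - l.length] ∈ t := List.getElem_mem _
      have hnl : t[iv - l.length] ∉ l := by
        have := (List.mem_filter.mp hmt).2
        simpa using this
      have := hv.2 _ hnl
      rw [hB]
      simp only [hσs, hgl]
      exact this

end Aux
section Aux2

variable {M : Type*} [Fintype M] [DecidableEq M] {n : ℕ} {ε : ℝ} {R : (Fin n → M) → Bool}

lemma tvIte_top {c1 c2 : Prop} [Decidable c1] [Decidable c2]
    (h : (if c1 then TV.top else if c2 then TV.bot else TV.up) = TV.top) : c1 := by
  split_ifs at h <;> first | assumption | exact TV.noConfusion h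

lemma tvIte_bot {c1 c2 : Prop} [Decidable c1] [Decidable c2]
    (h : (if c1 then TV.top else if c2 then TV.bot else TV.up) = TV.bot) : c2 := by
  split_ifs at h <;> first | assumption | exact TV.noConfusion h

set_option maxHeartbeats 2000000 in
lemma key_count (hε0 : 0 < ε) (hε : ε < 1/4) {j k : Fin n} {rest : List (Fin n)}
    {C : Fin n → Arg M}
    (hnd : (j :: k :: rest).Nodup) (hv : ValidCfg ε R (j :: k :: rest) C)
    (h1 : pollAux ε R (j :: k :: rest) C = TV.top)
    (h2 : pollAux ε R (k :: j :: rest) C = TV.bot) : False := by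
  classical
  have hnd' : (k :: j :: rest).Nodup := by simp at hnd ⊢; tauto
  have hv' : ValidCfg ε R (k :: j :: rest) C :=
    ⟨fun i hi => hv.1 i (by simp at hi ⊢; tauto), fun i hi => hv.2 i (by simp at hi ⊢; tauto)⟩
  have hjk : j ≠ k := by simp at hnd; tauto
  have hkj : k ≠ j := hjk.symm
  have hjr : j ∉ k :: rest := by simp at hnd ⊢; tauto
  have hkr : k ∉ j :: rest := by simp at hnd' ⊢; tauto
  have hkrest : k ∉ rest := by simp at hnd; tauto
  obtain ⟨Aj, hAj, _⟩ := hv.1 j (by simp)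
  obtain ⟨Ak, hAk, _⟩ := hv.1 k (by simp)
  set f : M → M → TV := fun a b =>
    pollAux ε R rest (Function.update (Function.update C j (Sum.inl a)) k (Sum.inl b)) with hf
  -- validity of sub-configurations
  have hvg : ∀ a : M, ValidCfg ε R (k :: rest) (Function.update C j (Sum.inl a)) :=
    fun a => validCfg_cons_update hjr hv
  have hvh : ∀ b : M, ValidCfg ε R (j :: rest) (Function.update C k (Sum.inl b)) :=
    fun b => validCfg_cons_update hkr hv'
  have hvf : ∀ a b : M, ValidCfg ε R rest
      (Function.update (Function.update C j (Sum.inl a)) k (Sum.inl b)) :=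
    fun a b => validCfg_cons_update hkrest (hvg a)
  have hfne : ∀ a b, f a b ≠ TV.up := fun a b => pollAux_ne_up (by simp at hnd; tauto) (hvf a b)
  -- unfold h1
  rw [pollAux_cons hAj] at h1
  -- unfold h2
  rw [pollAux_cons hAk] at h2
  have hc1 := tvIte_top h1
  have hd2 := tvIte_bot h2
  -- hc1 : top count over Aj of (pollAux (k::rest) (update C j a)) = top
  -- hd2 : bot count over Ak of (pollAux (j::rest) (update C k b)) = bot
  set G : Finset M := Aj.filter
    (fun a => pollAux ε R (k :: rest) (Function.update C j (Sum.inl a)) = TV.top) with hG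
  set H : Finset M := Ak.filter
    (fun b => pollAux ε R (j :: rest) (Function.update C k (Sum.inl b)) = TV.bot) with hHdef
  have hGA : ∀ a ∈ G, ((Ak.filter fun b => f a b = TV.top).card : ℝ) > (1 - ε) * Ak.card := by
    intro a ha
    have hga := (Finset.mem_filter.mp ha).2
    have hDk : (Function.update C j (Sum.inl a)) k = Sum.inr Ak := by
      rw [Function.update_of_ne hkj, hAk]
    rw [pollAux_cons hDk] at hga
    exact tvIte_top hga
  have hHA : ∀ b ∈ H, ((Aj.filter fun a => f a b = TV.bot).card : ℝ) > (1 - ε) * Aj.card := by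
    intro b hb
    have hgb := (Finset.mem_filter.mp hb).2
    have hDj : (Function.update C k (Sum.inl b)) j = Sum.inr Aj := by
      rw [Function.update_of_ne hjk, hAj]
    rw [pollAux_cons hDj] at hgb
    have hcomm : ∀ a : M,
        Function.update (Function.update C k (Sum.inl b)) j (Sum.inl a)
          = Function.update (Function.update C j (Sum.inl a)) k (Sum.inl b) :=
      fun a => Function.update_comm hkj _ _ _
    simp only [hcomm] at hgb
    exact tvIte_bot hgb
  -- nonemptiness
  have hε1 : (0:ℝ) < 1 - ε := by linarith
  have hGne : G.Nonempty := by
    rw [← Finset.card_pos]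
    by_contra hcon
    have h0 : G.card = 0 := by omega
    rw [h0] at hc1
    push_cast at hc1
    nlinarith [Nat.cast_nonneg (α := ℝ) Aj.card]
  have hHne : H.Nonempty := by
    rw [← Finset.card_pos]
    by_contra hcon
    have h0 : H.card = 0 := by omega
    rw [h0] at hd2
    push_cast at hd2
    nlinarith [Nat.cast_nonneg (α := ℝ) Ak.card]
  have hN1 : 1 ≤ Aj.card := Finset.card_pos.mpr ⟨hGne.choose, Finset.filter_subset _ _ hGne.choose_spec⟩
  have hN2 : 1 ≤ Ak.card := Finset.card_pos.mpr ⟨hHne.choose, Finset.filter_subset _ _ hHne.choose_spec⟩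
  -- the double counts
  set ST : ℕ := ∑ a ∈ Aj, (Ak.filter fun b => f a b = TV.top).card with hST
  set SB : ℕ := ∑ b ∈ Ak, (Aj.filter fun a => f a b = TV.bot).card with hSB
  have hSB' : SB = ∑ a ∈ Aj, (Ak.filter fun b => f a b = TV.bot).card := by
    rw [hSB]
    simp only [Finset.card_filter]
    rw [Finset.sum_comm]
  have hsum : ST + SB ≤ Aj.card * Ak.card := by
    rw [hST, hSB']
    rw [← Finset.sum_add_distrib]
    calc ∑ a ∈ Aj, ((Ak.filter fun b => f a b = TV.top).card
            + (Ak.filter fun b => f a b = TV.bot).card)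
        ≤ ∑ _a ∈ Aj, Ak.card := by
          refine Finset.sum_le_sum fun a _ => ?_
          rw [← Finset.card_union_of_disjoint]
          · exact Finset.card_le_card
              (Finset.union_subset (Finset.filter_subset _ _) (Finset.filter_subset _ _))
          · rw [Finset.disjoint_left]
            intro b hb1 hb2
            have e1 := (Finset.mem_filter.mp hb1).2
            have e2 := (Finset.mem_filter.mp hb2).2
            rw [e1] at e2
            exact TV.noConfusion e2
      _ = Aj.card * Ak.card := by rw [Finset.sum_const, smul_eq_mul]
  -- lower bound for ST
  have hTlow : ((1 - ε) * Aj.card) * ((1 - ε) * Ak.card) < (ST : ℝ) := by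
    have s1 : ∑ a ∈ G, (((Ak.filter fun b => f a b = TV.top).card : ℝ)) ≤ (ST : ℝ) := by
      rw [hST]
      push_cast
      refine Finset.sum_le_sum_of_subset_of_nonneg (Finset.filter_subset _ _) ?_
      intro a _ _
      exact Nat.cast_nonneg _
    have s2 : ∑ a ∈ G, ((1 - ε) * (Ak.card : ℝ)) < ∑ a ∈ G, (((Ak.filter fun b => f a b = TV.top).card : ℝ)) :=
      Finset.sum_lt_sum_of_nonempty hGne hGA
    simp only [Finset.sum_const, nsmul_eq_mul] at s2
    have s3 : ((1 - ε) * Aj.card) * ((1 - ε) * Ak.card) ≤ (G.card : ℝ) * ((1 - ε) * Ak.card) := by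
      apply mul_le_mul_of_nonneg_right (le_of_lt hc1)
      exact mul_nonneg (le_of_lt hε1) (Nat.cast_nonneg _)
    linarith
  have hBlow : ((1 - ε) * Ak.card) * ((1 - ε) * Aj.card) < (SB : ℝ) := by
    have s1 : ∑ b ∈ H, (((Aj.filter fun a => f a b = TV.bot).card : ℝ)) ≤ (SB : ℝ) := by
      rw [hSB]
      push_cast
      refine Finset.sum_le_sum_of_subset_of_nonneg (Finset.filter_subset _ _) ?_
      intro a _ _
      exact Nat.cast_nonneg _
    have s2 : ∑ b ∈ H, ((1 - ε) * (Aj.card : ℝ)) < ∑ b ∈ H, (((Aj.filter fun a => f a b = TV.bot).card : ℝ)) :=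
      Finset.sum_lt_sum_of_nonempty hHne hHA
    simp only [Finset.sum_const, nsmul_eq_mul] at s2
    have s3 : ((1 - ε) * Ak.card) * ((1 - ε) * Aj.card) ≤ (H.card : ℝ) * ((1 - ε) * Aj.card) := by
      apply mul_le_mul_of_nonneg_right (le_of_lt hd2)
      exact mul_nonneg (le_of_lt hε1) (Nat.cast_nonneg _)
    linarith
  have hsumR : (ST : ℝ) + (SB : ℝ) ≤ (Aj.card : ℝ) * (Ak.card : ℝ) := by
    push_cast [← Nat.cast_add]
    exact_mod_cast hsum
  have hN1R : (1:ℝ) ≤ (Aj.card : ℝ) := by exact_mod_cast hN1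
  have hN2R : (1:ℝ) ≤ (Ak.card : ℝ) := by exact_mod_cast hN2
  have hP : (0:ℝ) < (Aj.card:ℝ) * (Ak.card:ℝ) := by nlinarith
  have h2e : (0:ℝ) < 1 - 4*ε + 2*ε^2 := by nlinarith
  nlinarith [mul_pos h2e hP, hTlow, hBlow, hsumR]

end Aux2
section Aux3

variable {M : Type*} [Fintype M] [DecidableEq M] {n : ℕ} {ε : ℝ} {R : (Fin n → M) → Bool}

lemma swap_eq (hε0 : 0 < ε) (hε : ε < 1/4) {j k : Fin n} {rest : List (Fin n)}
    {C : Fin n → Arg M}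
    (hnd : (j :: k :: rest).Nodup) (hv : ValidCfg ε R (j :: k :: rest) C) :
    pollAux ε R (j :: k :: rest) C = pollAux ε R (k :: j :: rest) C := by
  have hnd' : (k :: j :: rest).Nodup := by simp at hnd ⊢; tauto
  have hv' : ValidCfg ε R (k :: j :: rest) C :=
    ⟨fun i hi => hv.1 i (by simp at hi ⊢; tauto), fun i hi => hv.2 i (by simp at hi ⊢; tauto)⟩
  have d1 := pollAux_ne_up hnd hv
  have d2 := pollAux_ne_up hnd' hv'
  cases hV1 : pollAux ε R (j :: k :: rest) C <;> cases hV2 : pollAux ε R (k :: j :: rest) C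
  · rfl
  · exact absurd (key_count hε0 hε hnd hv hV1 hV2) not_false
  · exact absurd hV2 d2
  · exact absurd (key_count hε0 hε hnd' hv' hV2 hV1) not_false
  · rfl
  · exact absurd hV2 d2
  · exact absurd hV1 d1
  · exact absurd hV1 d1
  · exact absurd hV1 d1

lemma perm_eq (hε0 : 0 < ε) (hε : ε < 1/4) {l1 l2 : List (Fin n)} (hp : l1.Perm l2) :
    ∀ {C : Fin n → Arg M}, l1.Nodup → ValidCfg ε R l1 C →
      pollAux ε R l1 C = pollAux ε R l2 C := by
  induction hp with
  | nil => intro C _ _; rfl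
  | cons x p ih =>
    intro C hnd hv
    obtain ⟨S, hS, _⟩ := hv.1 x (by simp)
    have hx : x ∉ _ := (List.nodup_cons.mp hnd).1
    have heq : ∀ a : M,
        pollAux ε R _ (Function.update C x (Sum.inl a))
          = pollAux ε R _ (Function.update C x (Sum.inl a)) :=
      fun a => ih ((List.nodup_cons.mp hnd).2) (validCfg_cons_update hx hv)
    rw [pollAux_cons hS, pollAux_cons hS]
    simp only [heq]
  | swap x y l =>
    intro C hnd hv
    exact swap_eq hε0 hε hnd hv
  | trans p1 p2 ih1 ih2 =>
    intro C hnd hv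
    have hnd2 := p1.nodup_iff.mp hnd
    have hv2 : ValidCfg ε R _ C :=
      ⟨fun i hi => hv.1 i (p1.mem_iff.mpr hi), fun i hi => hv.2 i fun h => hi (p1.mem_iff.mp h)⟩
    rw [ih1 hnd hv, ih2 hnd2 hv2]

end Aux3

/-- Corollary: `Ê_ε` is well defined on excellent sets.
For any ε-excellent sets `A_0, …, A_{n-1} ∈ M̂∖M` (where `n = arity(E)`), the value
`Ê^m̄_ε(A_0,…,A_{n-1})` is a truth value (`⊤` or `⊥`), the same for every enumeration `m̄`
of `{0,…,n-1}`. -/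
theorem statement1 {L : RelLanguage} {M : Type} [Fintype M] [DecidableEq M]
    (𝓜 : RelStructure L M) (E : L.Symb)
    (ε : ℝ) (hε0 : 0 < ε) (hε : ε < 1 / 4)
    (A : Fin (L.arity E) → Finset M)
    (hexc : ∀ i, IsExcellent ε 𝓜 (Sum.inr (A i))) :
    ∃ v : TV, v ≠ TV.up ∧
      ∀ mbar : List (Fin (L.arity E)), mbar.Nodup → (∀ i, i ∈ mbar) →
        partialRel ε (𝓜.rel E) mbar (fun i => Sum.inr (A i)) = v := by
  classical
  have hvalid : ∀ l : List (Fin (L.arity E)), (∀ i, i ∈ l) →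
      ValidCfg ε (𝓜.rel E) l (fun i => Sum.inr (A i)) := by
    intro l hcomp
    exact ⟨fun i _ => ⟨A i, rfl, hexc i E⟩, fun i hi => absurd (hcomp i) hi⟩
  refine ⟨pollAux ε (𝓜.rel E) (List.finRange (L.arity E)) (fun i => Sum.inr (A i)), ?_, ?_⟩
  · exact pollAux_ne_up (List.nodup_finRange _) (hvalid _ List.mem_finRange)
  · intro mbar hnd hcomp
    rw [partialRel]
    have hnd' : mbar.reverse.Nodup := List.nodup_reverse.mpr hnd
    have hcomp' : ∀ i, i ∈ mbar.reverse := fun i => List.mem_reverse.mpr (hcomp i)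
    have hperm : mbar.reverse.Perm (List.finRange (L.arity E)) := by
      apply List.perm_of_nodup_nodup_toFinset_eq hnd' (List.nodup_finRange _)
      ext a
      simp [hcomp a, List.mem_finRange]
    exact perm_eq hε0 hε hperm hnd' (hvalid _ hcomp')
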